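/- Let s ∈ [0,1), C, R > 0, α ≥ 0, and let (a_k) be a complex sequence with |a_k| ≤ C · (k!)^s / (R^k · k^α) for all k ≥ 1 (and |a_0| ≤ C). Then the power series f(x) = Σ_{k≥0} a_k x^k / k! converges for all real x, and for every L > 0 there exist constants C' > 0 and R' > 0 such that for all m ≥ 0 and all x ∈ [−L, L], |f^(m)(x)| ≤ C' · (m!)^s / (R'^m). In particular f is Gevrey of order s on [−L, L]. -/

import Mathlib

open Real Set

private lemma choose_le_two_pow' (n k : ℕ) : n.choose k ≤ 2 ^ n := by
  rcases le_or_gt k n with h | h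
  · calc n.choose k ≤ ∑ m ∈ Finset.range (n + 1), n.choose m :=
        Finset.single_le_sum (fun i _ => Nat.zero_le _)
          (Finset.mem_range.mpr (Nat.lt_succ_of_le h))
    _ = 2 ^ n := Nat.sum_range_choose n
  · rw [Nat.choose_eq_zero_of_lt h]; positivity

private lemma fact_add_le' (k m : ℕ) :
    ((k + m).factorial) ≤ 2 ^ (k + m) * k.factorial * m.factorial := by
  calc (k + m).factorial = (k + m).choose m * k.factorial * m.factorial :=
        (Nat.add_choose_mul_factorial_mul_factorial k m).symm
  _ ≤ 2 ^ (k + m) * k.factorial * m.factorial :=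
      Nat.mul_le_mul_right _ (Nat.mul_le_mul_right _ (choose_le_two_pow' (k + m) m))

private lemma aux_summable (s : ℝ) (hs1 : s < 1) (q : ℝ) (hq : 0 ≤ q) :
    Summable (fun k : ℕ => q ^ k * (Nat.factorial k : ℝ) ^ (s - 1)) := by
  rcases eq_or_lt_of_le hq with hq0 | hq0
  · apply summable_of_ne_finset_zero (s := {0})
    intro k hk
    simp only [Finset.mem_singleton] at hk
    rw [← hq0, zero_pow hk, zero_mul]
  · apply summable_of_ratio_norm_eventually_le (r := 1/2) (by norm_num)
    have h1s : (0:ℝ) < 1 - s := by linarith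
    have htend : Filter.Tendsto (fun n : ℕ => ((n : ℝ) + 1) ^ (1 - s))
        Filter.atTop Filter.atTop :=
      (tendsto_rpow_atTop h1s).comp
        (Filter.tendsto_atTop_add_const_right _ 1 tendsto_natCast_atTop_atTop)
    filter_upwards [htend.eventually_ge_atTop (2 * q)] with n hn
    have hfn : (0:ℝ) < (Nat.factorial n : ℝ) := by positivity
    have hn1 : (0:ℝ) < (n : ℝ) + 1 := by positivity
    have hfact : ((Nat.factorial (n + 1) : ℝ)) = ((n : ℝ) + 1) * (Nat.factorial n : ℝ) := by
      push_cast [Nat.factorial_succ]; ring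
    rw [Real.norm_of_nonneg (by positivity), Real.norm_of_nonneg (by positivity),
      hfact, Real.mul_rpow hn1.le hfn.le, pow_succ]
    have hpow : (0:ℝ) < ((n : ℝ) + 1) ^ (1 - s) := Real.rpow_pos_of_pos hn1 _
    have key : q * ((n : ℝ) + 1) ^ (s - 1) ≤ 1 / 2 := by
      have hinv : ((n : ℝ) + 1) ^ (s - 1) = (((n : ℝ) + 1) ^ (1 - s))⁻¹ := by
        rw [← Real.rpow_neg hn1.le]; ring_nf
      rw [hinv, mul_inv_le_iff₀ hpow]
      linarith
    calc q ^ n * q * (((n : ℝ) + 1) ^ (s - 1) * (Nat.factorial n : ℝ) ^ (s - 1))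
        = (q * ((n : ℝ) + 1) ^ (s - 1)) * (q ^ n * (Nat.factorial n : ℝ) ^ (s - 1)) := by ring
      _ ≤ 1 / 2 * (q ^ n * (Nat.factorial n : ℝ) ^ (s - 1)) :=
          mul_le_mul_of_nonneg_right key (by positivity)

theorem gevrey_of_coeff_bound (s C R α : ℝ) (hs0 : 0 ≤ s) (hs1 : s < 1)
    (hC : 0 < C) (hR : 0 < R) (hα : 0 ≤ α) (a : ℕ → ℂ)
    (ha0 : ‖a 0‖ ≤ C)
    (ha : ∀ k : ℕ, 1 ≤ k → ‖a k‖ ≤ C * (Nat.factorial k : ℝ) ^ s / (R ^ k * (k : ℝ) ^ α)) :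
    (∀ x : ℝ, Summable (fun k : ℕ => a k * (x : ℂ) ^ k / (Nat.factorial k : ℂ))) ∧
    ∀ L : ℝ, 0 < L → ∃ C' R' : ℝ, 0 < C' ∧ 0 < R' ∧
      ∀ (m : ℕ) (x : ℝ), x ∈ Icc (-L) L →
        ‖iteratedDeriv m
            (fun x : ℝ => ∑' k : ℕ, a k * (x : ℂ) ^ k / (Nat.factorial k : ℂ)) x‖
          ≤ C' * (Nat.factorial m : ℝ) ^ s / R' ^ m := by
  have h2s : (0:ℝ) < (2:ℝ) ^ s := Real.rpow_pos_of_pos two_pos s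
  -- unified coefficient bound
  have ha' : ∀ n : ℕ, ‖a n‖ ≤ C * (Nat.factorial n : ℝ) ^ s / R ^ n := by
    intro n
    rcases Nat.eq_zero_or_pos n with rfl | hn
    · simpa using ha0
    · refine (ha n hn).trans ?_
      have h1 : (1:ℝ) ≤ (n : ℝ) ^ α := by
        have : ((n:ℝ)) ^ (0:ℝ) ≤ (n:ℝ) ^ α :=
          Real.rpow_le_rpow_of_exponent_le (by exact_mod_cast hn) hα
        simpa using this
      have hRn : (0:ℝ) < R ^ n := by positivity
      apply div_le_div_of_nonneg_left (by positivity) hRn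
      calc R ^ n = R ^ n * 1 := by ring
        _ ≤ R ^ n * (n : ℝ) ^ α := by gcongr
  -- per-term bound
  have key : ∀ (m k : ℕ) (t : ℝ), 0 ≤ t → ∀ x : ℝ, |x| ≤ t →
      ‖a (k + m) * (x : ℂ) ^ k / (Nat.factorial k : ℂ)‖ ≤
        (C * (Nat.factorial m : ℝ) ^ s * ((2:ℝ) ^ s / R) ^ m) *
          (((2:ℝ) ^ s * t / R) ^ k * (Nat.factorial k : ℝ) ^ (s - 1)) := by
    intro m k t ht x hx
    have hfk : (0:ℝ) < (Nat.factorial k : ℝ) := by positivity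
    have hfm : (0:ℝ) < (Nat.factorial m : ℝ) := by positivity
    have hnorm : ‖a (k + m) * (x : ℂ) ^ k / (Nat.factorial k : ℂ)‖
        = ‖a (k + m)‖ * |x| ^ k / (Nat.factorial k : ℝ) := by
      rw [norm_div, norm_mul, norm_pow]
      simp [Complex.norm_real]
    rw [hnorm]
    have h1 : ‖a (k + m)‖ * |x| ^ k / (Nat.factorial k : ℝ) ≤
        (C * ((k + m).factorial : ℝ) ^ s / R ^ (k + m)) * t ^ k / (Nat.factorial k : ℝ) := by
      rw [div_eq_mul_inv, div_eq_mul_inv]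
      refine mul_le_mul_of_nonneg_right ?_ (by positivity)
      exact mul_le_mul (ha' _) (pow_le_pow_left₀ (abs_nonneg x) hx k)
        (by positivity) (by positivity)
    refine h1.trans ?_
    have h2 : (((k + m).factorial : ℝ)) ^ s ≤
        ((2:ℝ) ^ s) ^ (k + m) * (Nat.factorial k : ℝ) ^ s * (Nat.factorial m : ℝ) ^ s := by
      have hb : (((k + m).factorial : ℝ)) ≤
          (2:ℝ) ^ (k + m) * (Nat.factorial k : ℝ) * (Nat.factorial m : ℝ) := by
        exact_mod_cast fact_add_le' k m
      calc (((k + m).factorial : ℝ)) ^ s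
          ≤ ((2:ℝ) ^ (k + m) * (Nat.factorial k : ℝ) * (Nat.factorial m : ℝ)) ^ s :=
            Real.rpow_le_rpow (by positivity) hb hs0
        _ = ((2:ℝ) ^ s) ^ (k + m) * (Nat.factorial k : ℝ) ^ s * (Nat.factorial m : ℝ) ^ s := by
            rw [Real.mul_rpow (by positivity) (by positivity),
              Real.mul_rpow (by positivity) (by positivity),
              ← Real.rpow_natCast (2:ℝ) (k + m), ← Real.rpow_mul (by norm_num),
              mul_comm ((k + m : ℕ) : ℝ) s, Real.rpow_mul (by norm_num),
              Real.rpow_natCast]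
    have h3 : (Nat.factorial k : ℝ) ^ s =
        (Nat.factorial k : ℝ) ^ (s - 1) * (Nat.factorial k : ℝ) := by
      have := Real.rpow_add hfk (s - 1) 1
      rw [sub_add_cancel, Real.rpow_one] at this
      exact this
    calc (C * ((k + m).factorial : ℝ) ^ s / R ^ (k + m)) * t ^ k / (Nat.factorial k : ℝ)
        ≤ (C * (((2:ℝ) ^ s) ^ (k + m) * (Nat.factorial k : ℝ) ^ s * (Nat.factorial m : ℝ) ^ s)
            / R ^ (k + m)) * t ^ k / (Nat.factorial k : ℝ) := by gcongr
      _ = (C * (Nat.factorial m : ℝ) ^ s * ((2:ℝ) ^ s / R) ^ m) *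
          (((2:ℝ) ^ s * t / R) ^ k * (Nat.factorial k : ℝ) ^ (s - 1)) := by
          have hR' : R ≠ 0 := ne_of_gt hR
          have hfk' : (Nat.factorial k : ℝ) ≠ 0 := ne_of_gt hfk
          rw [pow_add, pow_add, h3]
          field_simp
          ring_nf
          simp only [inv_pow]
          field_simp
  -- summability and tsum bound
  have B : ∀ (m : ℕ) (t : ℝ), 0 ≤ t → ∀ x : ℝ, |x| ≤ t →
      Summable (fun k : ℕ => a (k + m) * (x : ℂ) ^ k / (Nat.factorial k : ℂ)) ∧
      ‖∑' k : ℕ, a (k + m) * (x : ℂ) ^ k / (Nat.factorial k : ℂ)‖ ≤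
        (C * (Nat.factorial m : ℝ) ^ s * ((2:ℝ) ^ s / R) ^ m) *
          ∑' k : ℕ, ((2:ℝ) ^ s * t / R) ^ k * (Nat.factorial k : ℝ) ^ (s - 1) := by
    intro m t ht x hx
    have hq : (0:ℝ) ≤ (2:ℝ) ^ s * t / R := by positivity
    have hsum := aux_summable s hs1 _ hq
    have hsum2 : Summable (fun k : ℕ =>
        (C * (Nat.factorial m : ℝ) ^ s * ((2:ℝ) ^ s / R) ^ m) *
          (((2:ℝ) ^ s * t / R) ^ k * (Nat.factorial k : ℝ) ^ (s - 1))) := hsum.mul_left _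
    have hsummable : Summable (fun k : ℕ => a (k + m) * (x : ℂ) ^ k / (Nat.factorial k : ℂ)) :=
      Summable.of_norm_bounded hsum2 (fun k => key m k t ht x hx)
    refine ⟨hsummable, ?_⟩
    calc ‖∑' k : ℕ, a (k + m) * (x : ℂ) ^ k / (Nat.factorial k : ℂ)‖
        ≤ ∑' k : ℕ, ‖a (k + m) * (x : ℂ) ^ k / (Nat.factorial k : ℂ)‖ :=
          norm_tsum_le_tsum_norm hsummable.norm
      _ ≤ ∑' k : ℕ, (C * (Nat.factorial m : ℝ) ^ s * ((2:ℝ) ^ s / R) ^ m) *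
            (((2:ℝ) ^ s * t / R) ^ k * (Nat.factorial k : ℝ) ^ (s - 1)) :=
          Summable.tsum_le_tsum (fun k => key m k t ht x hx) hsummable.norm hsum2
      _ = (C * (Nat.factorial m : ℝ) ^ s * ((2:ℝ) ^ s / R) ^ m) *
            ∑' k : ℕ, ((2:ℝ) ^ s * t / R) ^ k * (Nat.factorial k : ℝ) ^ (s - 1) :=
          tsum_mul_left
  -- term-wise derivative identity
  have hshift : ∀ (m j : ℕ) (y : ℝ),
      a (j + 1 + m) * (((j:ℂ) + 1) * (y : ℂ) ^ j) / (Nat.factorial (j + 1) : ℂ)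
        = a (j + (m + 1)) * (y : ℂ) ^ j / (Nat.factorial j : ℂ) := by
    intro m j y
    rw [show j + 1 + m = j + (m + 1) by omega]
    have hfact : (Nat.factorial (j + 1) : ℂ) = ((j:ℂ) + 1) * (Nat.factorial j : ℂ) := by
      push_cast [Nat.factorial_succ]; ring
    have hj1 : ((j:ℂ) + 1) ≠ 0 := Nat.cast_add_one_ne_zero j
    have hjf : (Nat.factorial j : ℂ) ≠ 0 := by
      exact_mod_cast Nat.cast_ne_zero.mpr (Nat.factorial_ne_zero j)
    rw [hfact]
    field_simp
  -- derivative of the shifted series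
  have hderiv : ∀ (m : ℕ) (x : ℝ),
      HasDerivAt (fun y : ℝ => ∑' k : ℕ, a (k + m) * (y : ℂ) ^ k / (Nat.factorial k : ℂ))
        (∑' k : ℕ, a (k + (m + 1)) * (x : ℂ) ^ k / (Nat.factorial k : ℂ)) x := by
    intro m x
    set r : ℝ := |x| + 1 with hr
    have hr0 : (0:ℝ) ≤ r := by positivity
    have hxr : |x| < r := by rw [hr]; linarith
    have hxmem : x ∈ Ioo (-r) r := by
      rcases abs_lt.mp hxr with ⟨h1, h2⟩; exact ⟨h1, h2⟩
    set u : ℕ → ℝ := fun k =>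
      (C * (Nat.factorial (m + 1) : ℝ) ^ s * ((2:ℝ) ^ s / R) ^ (m + 1)) *
        (((2:ℝ) ^ s * r / R) ^ (k - 1) * (Nat.factorial (k - 1) : ℝ) ^ (s - 1)) with hu
    have husum : Summable u := by
      rw [← summable_nat_add_iff 1]
      have := (aux_summable s hs1 ((2:ℝ) ^ s * r / R) (by positivity)).mul_left
        (C * (Nat.factorial (m + 1) : ℝ) ^ s * ((2:ℝ) ^ s / R) ^ (m + 1))
      simpa [hu] using this
    have hbound : ∀ (k : ℕ) (y : ℝ), y ∈ Ioo (-r) r →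
        ‖a (k + m) * ((k : ℂ) * (y : ℂ) ^ (k - 1)) / (Nat.factorial k : ℂ)‖ ≤ u k := by
      intro k y hy
      have hyr : |y| ≤ r := le_of_lt (abs_lt.mpr ⟨hy.1, hy.2⟩)
      match k with
      | 0 =>
        simp only [Nat.cast_zero, zero_mul, mul_zero, zero_div, norm_zero]
        rw [hu]; positivity
      | j + 1 =>
        have : a (j + 1 + m) * (((j + 1 : ℕ) : ℂ) * (y : ℂ) ^ (j + 1 - 1)) /
            (Nat.factorial (j + 1) : ℂ)
            = a (j + (m + 1)) * (y : ℂ) ^ j / (Nat.factorial j : ℂ) := by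
          have := hshift m j y
          push_cast
          push_cast at this
          convert this using 3
        rw [this]
        have hk := key (m + 1) j r hr0 y hyr
        simp only [hu, Nat.add_sub_cancel]
        calc ‖a (j + (m + 1)) * (y : ℂ) ^ j / (Nat.factorial j : ℂ)‖
            ≤ (C * (Nat.factorial (m + 1) : ℝ) ^ s * ((2:ℝ) ^ s / R) ^ (m + 1)) *
              (((2:ℝ) ^ s * r / R) ^ j * (Nat.factorial j : ℝ) ^ (s - 1)) := hk
          _ = _ := by ring
    have hderivterm : ∀ (k : ℕ) (y : ℝ),
        HasDerivAt (fun z : ℝ => a (k + m) * (z : ℂ) ^ k / (Nat.factorial k : ℂ))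
          (a (k + m) * ((k : ℂ) * (y : ℂ) ^ (k - 1)) / (Nat.factorial k : ℂ)) y := by
      intro k y
      have h := ((hasDerivAt_pow k ((y : ℝ) : ℂ)).comp_ofReal).const_mul
        (a (k + m) / (Nat.factorial k : ℂ))
      have hfun : (fun z : ℝ => a (k + m) * (z : ℂ) ^ k / (Nat.factorial k : ℂ))
          = fun z : ℝ => (a (k + m) / (Nat.factorial k : ℂ)) * (z : ℂ) ^ k := by
        funext z; ring
      rw [hfun]
      exact h.congr_deriv (by ring)
    have hsum0 : Summable (fun k : ℕ => a (k + m) * (x : ℂ) ^ k / (Nat.factorial k : ℂ)) :=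
      (B m r hr0 x hxr.le).1
    have hmain := hasDerivAt_tsum_of_isPreconnected husum isOpen_Ioo
      (isPreconnected_Ioo) (fun k y hy => hderivterm k y)
      (fun k y hy => hbound k y hy) hxmem hsum0 hxmem
    have hsumd : Summable (fun k : ℕ =>
        a (k + m) * ((k : ℂ) * (x : ℂ) ^ (k - 1)) / (Nat.factorial k : ℂ)) :=
      Summable.of_norm_bounded husum (fun k => hbound k x hxmem)
    have heq : (∑' k : ℕ, a (k + m) * ((k : ℂ) * (x : ℂ) ^ (k - 1)) / (Nat.factorial k : ℂ))
        = ∑' k : ℕ, a (k + (m + 1)) * (x : ℂ) ^ k / (Nat.factorial k : ℂ) := by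
      rw [Summable.tsum_eq_zero_add hsumd]
      simp only [Nat.cast_zero, zero_mul, mul_zero, zero_div, zero_add]
      refine tsum_congr fun j => ?_
      have h := hshift m j x
      push_cast
      push_cast at h
      convert h using 3
    rw [heq] at hmain
    exact hmain
  -- iterated derivatives
  have hiter : ∀ m : ℕ,
      iteratedDeriv m (fun x : ℝ => ∑' k : ℕ, a k * (x : ℂ) ^ k / (Nat.factorial k : ℂ))
        = fun x : ℝ => ∑' k : ℕ, a (k + m) * (x : ℂ) ^ k / (Nat.factorial k : ℂ) := by
    intro m
    induction m with
    | zero =>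
      rw [iteratedDeriv_zero]
      funext y
      exact tsum_congr fun k => by rw [Nat.add_zero]
    | succ n ih =>
      rw [iteratedDeriv_succ, ih]
      funext y
      exact (hderiv n y).deriv
  constructor
  · intro x
    exact (B 0 |x| (abs_nonneg x) x le_rfl).1
  · intro L hL
    have hTsum := aux_summable s hs1 ((2:ℝ) ^ s * L / R) (by positivity)
    set T : ℝ := ∑' k : ℕ, ((2:ℝ) ^ s * L / R) ^ k * (Nat.factorial k : ℝ) ^ (s - 1) with hT
    have hT1 : (1:ℝ) ≤ T := by
      have h0 := Summable.le_tsum hTsum 0 (fun j _ => by positivity)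
      simpa using h0
    have hT0 : (0:ℝ) < T := lt_of_lt_of_le one_pos hT1
    refine ⟨C * T, R / (2:ℝ) ^ s, by positivity, by positivity, ?_⟩
    intro m x hx
    have hxL : |x| ≤ L := abs_le.mpr ⟨hx.1, hx.2⟩
    have hb := (B m L hL.le x hxL).2
    rw [hiter m]
    rw [← hT] at hb
    refine hb.trans (le_of_eq ?_)
    have h2sm : ((2:ℝ) ^ s) ^ m ≠ 0 := by positivity
    have hRm : R ^ m ≠ 0 := by positivity
    rw [div_pow, div_pow]
    field_simp
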